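/- Let U' ⊆ I be an open interval on which f_n never vanishes, and let F : U' → ℝ be a differentiable function with F'(u) = |f_n(u)|^{1/(n−1)} for all u ∈ U'. Suppose ξ : ℝ → ℝ is differentiable, η : ℝ × U' → ℝ is differentiable in its second variable, and equation (Sn) holds: f_n'(u)·η(t,u) + (n−1)f_n(u)·η_u(t,u) + (2−n)f_n(u)·ξ'(t) = 0 for all (t,u) ∈ ℝ × U'. Then for every fixed t ∈ ℝ, the function u ↦ F'(u)·η(t,u) − ((n−2)/(n−1))·ξ'(t)·F(u) has derivative zero on U', and hence is constant on U'. In particular, ∂/∂u (|f_n(u)|^{1/(n−1)}·η(t,u)) = ((n−2)/(n−1))·|f_n(u)|^{1/(n−1)}·ξ'(t) on U'. -/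

import Mathlib

/-- Partial derivative in the second (space) variable. -/
noncomputable def pu (φ : ℝ → ℝ → ℝ) (t u : ℝ) : ℝ := deriv (fun x => φ t x) u

theorem stmt6 (n : ℕ) (hn : 4 ≤ n) (I : Set ℝ) (hI : IsOpen I) (hIc : I.OrdConnected)
    (fn : ℝ → ℝ) (hfn : ∀ u ∈ I, DifferentiableAt ℝ fn u)
    (U' : Set ℝ) (hU'I : U' ⊆ I) (hU' : IsOpen U') (hU'c : U'.OrdConnected)
    (hfn0 : ∀ u ∈ U', fn u ≠ 0)
    (F : ℝ → ℝ)
    (hF : ∀ u ∈ U', HasDerivAt F (|fn u| ^ ((1 : ℝ) / ((n : ℝ) - 1))) u)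
    (ξ : ℝ → ℝ) (hξ : Differentiable ℝ ξ)
    (η : ℝ → ℝ → ℝ) (hη : ∀ t : ℝ, ∀ u ∈ U', DifferentiableAt ℝ (η t) u)
    (hSn : ∀ t : ℝ, ∀ u ∈ U',
      deriv fn u * η t u + ((n : ℝ) - 1) * fn u * pu η t u
        + (2 - (n : ℝ)) * fn u * deriv ξ t = 0) :
    (∀ t : ℝ, ∀ u ∈ U',
      deriv (fun x => deriv F x * η t x - (((n : ℝ) - 2) / ((n : ℝ) - 1)) * deriv ξ t * F x) u
        = 0) ∧
    (∀ t : ℝ, ∀ u₁ ∈ U', ∀ u₂ ∈ U',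
      deriv F u₁ * η t u₁ - (((n : ℝ) - 2) / ((n : ℝ) - 1)) * deriv ξ t * F u₁
        = deriv F u₂ * η t u₂ - (((n : ℝ) - 2) / ((n : ℝ) - 1)) * deriv ξ t * F u₂) ∧
    (∀ t : ℝ, ∀ u ∈ U',
      deriv (fun x => |fn x| ^ ((1 : ℝ) / ((n : ℝ) - 1)) * η t x) u
        = (((n : ℝ) - 2) / ((n : ℝ) - 1)) * |fn u| ^ ((1 : ℝ) / ((n : ℝ) - 1)) * deriv ξ t) := by
  have hn1 : (n : ℝ) - 1 ≠ 0 := by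
    have : (4 : ℝ) ≤ (n : ℝ) := by exact_mod_cast hn
    linarith
  set α : ℝ := (1 : ℝ) / ((n : ℝ) - 1) with hα
  set g : ℝ → ℝ := fun x => |fn x| ^ α with hg
  -- derivative of g
  have hgd : ∀ u ∈ U', HasDerivAt g (α * g u * (deriv fn u / fn u)) u := by
    intro u hu
    have hfu : DifferentiableAt ℝ fn u := hfn u (hU'I hu)
    have hne := hfn0 u hu
    rcases lt_or_gt_of_ne hne with hneg | hpos
    · -- fn u < 0 : near u, |fn x| = -fn x
      have hev : ∀ᶠ x in nhds u, g x = (-fn x) ^ α := by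
        have hcont : ContinuousAt fn u := hfu.continuousAt
        have : ∀ᶠ x in nhds u, fn x < 0 := hcont.eventually_lt_const hneg
        filter_upwards [this] with x hx
        simp [hg, abs_of_neg hx]
      have h1 : HasDerivAt (fun x => (-fn x) ^ α)
          (α * (-fn u) ^ (α - 1) * (-deriv fn u)) u := by
        have hr := (Real.hasDerivAt_rpow_const (x := -fn u) (p := α)
          (Or.inl (by linarith)))
        exact hr.comp u (hfu.hasDerivAt.neg)
      have h2 : HasDerivAt g (α * (-fn u) ^ (α - 1) * (-deriv fn u)) u :=
        h1.congr_of_eventuallyEq hev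
      convert h2 using 1
      have hpos' : (0:ℝ) < -fn u := by linarith
      have h3 : (-fn u) ^ (α - 1) = (-fn u) ^ α / (-fn u) := by
        rw [Real.rpow_sub hpos', Real.rpow_one]
      have hgu : g u = (-fn u) ^ α := by simp [hg, abs_of_neg hneg]
      rw [hgu, h3]
      field_simp
    · have hev : ∀ᶠ x in nhds u, g x = (fn x) ^ α := by
        have hcont : ContinuousAt fn u := hfu.continuousAt
        have : ∀ᶠ x in nhds u, 0 < fn x := hcont.eventually_const_lt hpos
        filter_upwards [this] with x hx
        simp [hg, abs_of_pos hx]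
      have h1 : HasDerivAt (fun x => (fn x) ^ α)
          (α * (fn u) ^ (α - 1) * deriv fn u) u := by
        have hr := (Real.hasDerivAt_rpow_const (x := fn u) (p := α)
          (Or.inl (by linarith)))
        exact hr.comp u hfu.hasDerivAt
      have h2 : HasDerivAt g (α * (fn u) ^ (α - 1) * deriv fn u) u :=
        h1.congr_of_eventuallyEq hev
      convert h2 using 1
      have h3 : (fn u) ^ (α - 1) = (fn u) ^ α / fn u := by
        rw [Real.rpow_sub hpos, Real.rpow_one]
      have hgu : g u = (fn u) ^ α := by simp [hg, abs_of_pos hpos]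
      rw [hgu, h3]
      field_simp
  -- key algebraic identity
  have key : ∀ t : ℝ, ∀ u ∈ U',
      α * g u * (deriv fn u / fn u) * η t u + g u * pu η t u
        = (((n : ℝ) - 2) / ((n : ℝ) - 1)) * deriv ξ t * g u := by
    intro t u hu
    have hS := hSn t u hu
    have hne := hfn0 u hu
    set G := g u with hG
    clear_value G
    set A := deriv fn u with hA; clear_value A
    set E := η t u with hE; clear_value E
    set P := pu η t u with hP; clear_value P
    set X := deriv ξ t with hX; clear_value X
    set B := fn u with hB; clear_value B
    field_simp [hα]
    rw [hα]
    field_simp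
    linear_combination G * hS
  -- product derivative
  have hprod : ∀ t : ℝ, ∀ u ∈ U',
      HasDerivAt (fun x => g x * η t x)
        ((((n : ℝ) - 2) / ((n : ℝ) - 1)) * deriv ξ t * g u) u := by
    intro t u hu
    have h := (hgd u hu).mul (hη t u hu).hasDerivAt
    rw [show deriv (η t) u = pu η t u from rfl] at h
    rwa [key t u hu] at h
  refine ⟨?_, ?_, ?_⟩
  · intro t u hu
    have hev : (fun x => deriv F x * η t x
          - (((n : ℝ) - 2) / ((n : ℝ) - 1)) * deriv ξ t * F x)
        =ᶠ[nhds u] (fun x => g x * η t x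
          - (((n : ℝ) - 2) / ((n : ℝ) - 1)) * deriv ξ t * F x) := by
      filter_upwards [hU'.mem_nhds hu] with x hx
      rw [(hF x hx).deriv]
    rw [hev.deriv_eq]
    have h : HasDerivAt (fun x => g x * η t x
        - (((n : ℝ) - 2) / ((n : ℝ) - 1)) * deriv ξ t * F x)
        ((((n : ℝ) - 2) / ((n : ℝ) - 1)) * deriv ξ t * g u
          - (((n : ℝ) - 2) / ((n : ℝ) - 1)) * deriv ξ t * g u) u := by
      exact (hprod t u hu).sub ((hF u hu).const_mul _)
    rw [h.deriv]
    ring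
  · intro t u₁ hu₁ u₂ hu₂
    have hconv : Convex ℝ U' := convex_iff_ordConnected.mpr hU'c
    set h : ℝ → ℝ := fun x => g x * η t x
      - (((n : ℝ) - 2) / ((n : ℝ) - 1)) * deriv ξ t * F x with hh
    have hder : ∀ u ∈ U', HasDerivAt h 0 u := by
      intro u hu
      have := (hprod t u hu).sub ((hF u hu).const_mul
        ((((n : ℝ) - 2) / ((n : ℝ) - 1)) * deriv ξ t))
      exact this.congr_deriv (by simp [hg])
    have hconst : h u₁ = h u₂ := by
      apply hconv.is_const_of_fderivWithin_eq_zero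
        (f := h) (fun u hu => ((hder u hu).differentiableAt).differentiableWithinAt)
        ?_ hu₁ hu₂
      intro u hu
      have : fderivWithin ℝ h U' u = fderiv ℝ h u :=
        fderivWithin_of_isOpen hU' hu
      rw [this, (hder u hu).hasFDerivAt.fderiv]
      ext
      simp
    have e1 : deriv F u₁ = g u₁ := (hF u₁ hu₁).deriv
    have e2 : deriv F u₂ = g u₂ := (hF u₂ hu₂).deriv
    rw [e1, e2]
    exact hconst
  · intro t u hu
    exact (hprod t u hu).deriv.trans (by rw [hg]; ring)
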